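/- For every non-negative integer m and positive integer n, ∫₀^{π/2} x^{2m} cos^{2n}(x) dx = (2m)! · C(2n,n)/4^n · Σ_{j=0}^{m} (-1)^j ζ_n^⋆({2}_j)/(2^{2j}(2m-2j+1)!) · (π/2)^{2m-2j+1}, where ζ_n^⋆({2}_j) = Σ_{n ≥ k_1 ≥ … ≥ k_j ≥ 1} Π_{i=1}^{j} 1/k_i² (with ζ_n^⋆(∅) = 1). -/

import Mathlib

open Real Finset

/-- Multiple harmonic star sum `ζ_n^⋆({2}_j)`. -/
noncomputable def zstar : ℕ → ℕ → ℝ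
  | _, 0 => 1
  | n, j+1 => ∑ k ∈ Finset.Icc 1 n, zstar k j / ((k:ℝ))^2

lemma zstar_zero (n : ℕ) : zstar n 0 = 1 := rfl

lemma zstar_zero_succ (j : ℕ) : zstar 0 (j+1) = 0 := by rw [zstar]; simp

lemma zstar_succ (n j : ℕ) :
    zstar (n+1) (j+1) = zstar n (j+1) + zstar (n+1) j / ((n:ℝ)+1)^2 := by
  rw [zstar, Finset.sum_Icc_succ_top (by omega : 1 ≤ n+1)]
  conv_rhs => rw [zstar]
  push_cast; ring

noncomputable def II (p q : ℕ) : ℝ := ∫ x in (0:ℝ)..(π/2), x^p * (Real.cos x)^q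

noncomputable def SS (m n : ℕ) : ℝ :=
  ∑ j ∈ Finset.range (m+1),
    (-1)^j * zstar n j / (2^(2*j) * ((2*m-2*j+1).factorial : ℝ)) * (π/2)^(2*m-2*j+1)

noncomputable def RR (m n : ℕ) : ℝ :=
  ((2*m).factorial : ℝ) * ((Nat.choose (2*n) n : ℝ) / 4^n) * SS m n

lemma contII (p q : ℕ) : IntervalIntegrable (fun x : ℝ => x^p * Real.cos x ^ q)
    MeasureTheory.volume 0 (π/2) :=
  ((continuous_pow p).mul (Real.continuous_cos.pow q)).intervalIntegrable 0 (π/2)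

lemma II_base (m : ℕ) : II (2*m) 0 = (π/2)^(2*m+1) / (2*(m:ℝ)+1) := by
  simp only [II, pow_zero, mul_one, integral_pow]
  push_cast; ring

lemma SS_base (m : ℕ) : SS m 0 = (π/2)^(2*m+1) / ((2*m+1).factorial : ℝ) := by
  rw [SS, Finset.sum_eq_single 0]
  · simp [zstar_zero]
    ring
  · intro j _ hj
    obtain ⟨j', rfl⟩ := Nat.exists_eq_succ_of_ne_zero hj
    simp [zstar_zero_succ]
  · simp

lemma SS_zero (n : ℕ) : SS 0 n = π/2 := by
  simp [SS, zstar_zero]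

lemma SS_rec (m n : ℕ) :
    SS (m+1) (n+1) = SS (m+1) n - 1/(4*((n:ℝ)+1)^2) * SS m (n+1) := by
  have key : SS (m+1) (n+1) - SS (m+1) n = -(1/(4*((n:ℝ)+1)^2) * SS m (n+1)) := by
    rw [SS, SS, ← Finset.sum_sub_distrib, Finset.sum_range_succ']
    have h0 : ((-1:ℝ))^0 * zstar (n+1) 0 / (2^(2*0) * ((2*(m+1)-2*0+1).factorial : ℝ))
          * (π/2)^(2*(m+1)-2*0+1)
        - (-1:ℝ)^0 * zstar n 0 / (2^(2*0) * ((2*(m+1)-2*0+1).factorial : ℝ))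
          * (π/2)^(2*(m+1)-2*0+1) = 0 := by
      rw [zstar_zero, zstar_zero]; ring
    rw [h0, add_zero, SS, Finset.mul_sum, ← Finset.sum_neg_distrib]
    refine Finset.sum_congr rfl fun j hj => ?_
    have he : 2*(m+1)-2*(j+1)+1 = 2*m-2*j+1 := by omega
    rw [he, zstar_succ n j, pow_succ (-1:ℝ) j, show 2*(j+1) = 2*j+2 by ring, pow_add]
    have hne : ((n:ℝ)+1) ≠ 0 := by positivity
    field_simp
    ring
  linarith [key]

lemma cbN (n : ℕ) :
    ((n:ℝ)+1) * (Nat.choose (2*(n+1)) (n+1) : ℝ) = 2*(2*(n:ℝ)+1) * (Nat.choose (2*n) n : ℝ) := by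
  have h := Nat.succ_mul_centralBinom_succ n
  have h2 := congrArg (Nat.cast (R := ℝ)) h
  simp only [Nat.centralBinom] at h2
  push_cast at h2
  linarith [h2]

lemma RR_base (m : ℕ) : RR m 0 = (π/2)^(2*m+1) / (2*(m:ℝ)+1) := by
  rw [RR, SS_base]
  have hf : ((2*m+1).factorial : ℝ) = (2*(m:ℝ)+1) * ((2*m).factorial : ℝ) := by
    rw [Nat.factorial_succ]; push_cast; ring
  rw [hf]
  have h1 : ((2*m).factorial : ℝ) ≠ 0 := by positivity
  have h2 : (2*(m:ℝ)+1) ≠ 0 := by positivity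
  field_simp
  ring
  simp

lemma cbN' (n : ℕ) :
    ((Nat.choose (2*(n+1)) (n+1)):ℝ) = 2*(2*(n:ℝ)+1)*((Nat.choose (2*n) n):ℝ)/((n:ℝ)+1) := by
  have hne : ((n:ℝ)+1) ≠ 0 := by positivity
  field_simp
  linear_combination cbN n

lemma RR_rec0 (n : ℕ) :
    (2*(n:ℝ)+2) * RR 0 (n+1) = (2*(n:ℝ)+1) * RR 0 n := by
  rw [RR, RR, SS_zero, SS_zero, cbN', pow_succ]
  have h4 : ((4:ℝ))^n ≠ 0 := by positivity
  have hne : ((n:ℝ)+1) ≠ 0 := by positivity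
  field_simp
  ring

lemma RR_rec (m n : ℕ) :
    ((2*(n:ℝ)+2)*(2*(n:ℝ)+2)) * RR (m+1) (n+1)
      - ((2*(n:ℝ)+2)*(2*(n:ℝ)+1)) * RR (m+1) n
      + ((2*(m:ℝ)+2)*(2*(m:ℝ)+1)) * RR m (n+1) = 0 := by
  rw [RR, RR, RR, SS_rec]
  have hf : ((2*(m+1)).factorial : ℝ)
      = (2*(m:ℝ)+2) * ((2*(m:ℝ)+1) * ((2*m).factorial : ℝ)) := by
    rw [show 2*(m+1) = (2*m+1)+1 by ring, Nat.factorial_succ, Nat.factorial_succ]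
    push_cast; ring
  rw [hf, cbN', pow_succ]
  have h4 : ((4:ℝ))^n ≠ 0 := by positivity
  have hne : ((n:ℝ)+1) ≠ 0 := by positivity
  field_simp
  ring

lemma hasDeriv1 (m n : ℕ) (x : ℝ) :
    HasDerivAt (fun y : ℝ => (2*(n:ℝ)+2) * (y^(2*m+2) * Real.cos y^(2*n+1) * Real.sin y)
        + (2*(m:ℝ)+2) * (y^(2*m+1) * Real.cos y^(2*n+2)))
      (((2*(n:ℝ)+2)*(2*(n:ℝ)+2)) * (x^(2*m+2) * Real.cos x^(2*n+2))
        - ((2*(n:ℝ)+2)*(2*(n:ℝ)+1)) * (x^(2*m+2) * Real.cos x^(2*n))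
        + ((2*(m:ℝ)+2)*(2*(m:ℝ)+1)) * (x^(2*m) * Real.cos x^(2*n+2))) x := by
  have hc := Real.hasDerivAt_cos x
  have hs := Real.hasDerivAt_sin x
  have hp1 : HasDerivAt (fun y : ℝ => y^(2*m+2)) ((2*(m:ℝ)+2) * x^(2*m+1)) x := by
    simpa using hasDerivAt_pow (2*m+2) x
  have hp2 : HasDerivAt (fun y : ℝ => y^(2*m+1)) ((2*(m:ℝ)+1) * x^(2*m)) x := by
    simpa using hasDerivAt_pow (2*m+1) x
  have hcp1 : HasDerivAt (fun y : ℝ => Real.cos y ^ (2*n+1))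
      ((2*(n:ℝ)+1) * Real.cos x^(2*n) * (-Real.sin x)) x := by
    simpa using hc.fun_pow (2*n+1)
  have hcp2 : HasDerivAt (fun y : ℝ => Real.cos y ^ (2*n+2))
      ((2*(n:ℝ)+2) * Real.cos x^(2*n+1) * (-Real.sin x)) x := by
    simpa using hc.fun_pow (2*n+2)
  have h := (((hp1.mul hcp1).mul hs).const_mul (2*(n:ℝ)+2)).add
    ((hp2.mul hcp2).const_mul (2*(m:ℝ)+2))
  refine h.congr_deriv ?_; symm; simp only [Pi.mul_apply]
  have hsq : Real.sin x ^ 2 = 1 - Real.cos x ^ 2 := Real.sin_sq x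
  linear_combination ((2*(n:ℝ)+2)*(2*(n:ℝ)+1)) * x^(2*m+2) * Real.cos x^(2*n) * hsq

lemma hasDeriv0 (n : ℕ) (x : ℝ) :
    HasDerivAt (fun y : ℝ => Real.cos y^(2*n+1) * Real.sin y)
      ((2*(n:ℝ)+2) * (x^0 * Real.cos x^(2*n+2))
        - (2*(n:ℝ)+1) * (x^0 * Real.cos x^(2*n))) x := by
  have hc := Real.hasDerivAt_cos x
  have hs := Real.hasDerivAt_sin x
  have hcp1 : HasDerivAt (fun y : ℝ => Real.cos y ^ (2*n+1))
      ((2*(n:ℝ)+1) * Real.cos x^(2*n) * (-Real.sin x)) x := by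
    simpa using hc.fun_pow (2*n+1)
  have h := hcp1.mul hs
  refine h.congr_deriv ?_; symm
  have hsq : Real.sin x ^ 2 = 1 - Real.cos x ^ 2 := Real.sin_sq x
  linear_combination (2*(n:ℝ)+1) * Real.cos x^(2*n) * hsq

lemma key1 (m n : ℕ) :
    ((2*(n:ℝ)+2)*(2*(n:ℝ)+2)) * II (2*m+2) (2*n+2)
      - ((2*(n:ℝ)+2)*(2*(n:ℝ)+1)) * II (2*m+2) (2*n)
      + ((2*(m:ℝ)+2)*(2*(m:ℝ)+1)) * II (2*m) (2*n+2) = 0 := by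
  have h := intervalIntegral.integral_eq_sub_of_hasDerivAt (a := (0:ℝ)) (b := π/2)
    (fun x _ => hasDeriv1 m n x)
    (((((contII (2*m+2) (2*n+2)).const_mul _).sub
      ((contII (2*m+2) (2*n)).const_mul _)).add
      ((contII (2*m) (2*n+2)).const_mul _)))
  rw [intervalIntegral.integral_add (((contII (2*m+2) (2*n+2)).const_mul _).sub
      ((contII (2*m+2) (2*n)).const_mul _)) ((contII (2*m) (2*n+2)).const_mul _),
    intervalIntegral.integral_sub ((contII (2*m+2) (2*n+2)).const_mul _)
      ((contII (2*m+2) (2*n)).const_mul _),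
    intervalIntegral.integral_const_mul, intervalIntegral.integral_const_mul,
    intervalIntegral.integral_const_mul] at h
  rw [II, II, II, h]
  simp [Real.cos_pi_div_two, zero_pow]

lemma key0 (n : ℕ) :
    (2*(n:ℝ)+2) * II 0 (2*n+2) - (2*(n:ℝ)+1) * II 0 (2*n) = 0 := by
  have h := intervalIntegral.integral_eq_sub_of_hasDerivAt (a := (0:ℝ)) (b := π/2)
    (fun x _ => hasDeriv0 n x)
    (((contII 0 (2*n+2)).const_mul _).sub ((contII 0 (2*n)).const_mul _))
  rw [intervalIntegral.integral_sub ((contII 0 (2*n+2)).const_mul _)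
      ((contII 0 (2*n)).const_mul _),
    intervalIntegral.integral_const_mul, intervalIntegral.integral_const_mul] at h
  rw [II, II, h]
  simp [Real.cos_pi_div_two, zero_pow]

lemma main (n m : ℕ) : II (2*m) (2*n) = RR m n := by
  induction n generalizing m with
  | zero =>
    rw [show 2*0 = 0 from rfl, II_base, RR_base]
  | succ n ih =>
    induction m with
    | zero =>
      have hk := key0 n
      have hr := RR_rec0 n
      have h0 := ih 0
      rw [show 2*(0:ℕ) = 0 from rfl] at h0 ⊢
      rw [show 2*(n+1) = 2*n+2 by ring]
      have hne : (2*(n:ℝ)+2) ≠ 0 := by positivity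
      have : (2*(n:ℝ)+2) * II 0 (2*n+2) = (2*(n:ℝ)+2) * RR 0 (n+1) := by
        rw [hr, ← h0]; linarith [hk]
      exact mul_left_cancel₀ hne this
    | succ m ihm =>
      have hk := key1 m n
      have hr := RR_rec m n
      have h1 := ih (m+1)
      rw [show 2*(m+1) = 2*m+2 by ring] at h1 ⊢
      rw [show 2*(n+1) = 2*n+2 by ring] at ihm ⊢
      have hne : (2*(n:ℝ)+2)*(2*(n:ℝ)+2) ≠ 0 := by positivity
      have : ((2*(n:ℝ)+2)*(2*(n:ℝ)+2)) * II (2*m+2) (2*n+2)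
          = ((2*(n:ℝ)+2)*(2*(n:ℝ)+2)) * RR (m+1) (n+1) := by
        rw [← h1] at hr
        rw [← ihm] at hr
        linarith [hk, hr]
      exact mul_left_cancel₀ hne this

theorem stmt_18 (m n : ℕ) (hn : 0 < n) :
    ∫ x in (0:ℝ)..(π/2), x^(2*m) * (Real.cos x)^(2*n) =
      ((2*m).factorial : ℝ) * ((Nat.choose (2*n) n : ℝ) / 4^n) *
        ∑ j ∈ Finset.range (m+1),
          (-1)^j * zstar n j / (2^(2*j) * ((2*m-2*j+1).factorial : ℝ)) *
            (π/2)^(2*m-2*j+1) := by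
  have h := main n m
  rw [II, RR, SS] at h
  exact h
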